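/- Let G = ℤ₂ⁿ with q = 2ⁿ, and for x ∈ G let ‖x‖ denote the number of coordinates of x equal to 1. Let B_k = {x ∈ G : ‖x‖ ≤ k} and A_k = {x ∈ G : ‖x‖ > k} ∪ {0}. Assume n/2 − 1 < k ≤ n. Then λ±(B_k) ≤ (2k+2)/(q(2k+2−n)) and λ±(A_k) ≥ 1 − n/(2k+2). -/

import Mathlib

open scoped Pointwise ComplexOrder

noncomputable section

def IsStandard {G : Type*} [AddCommGroup G] (A : Set G) : Prop :=
  A = -A ∧ (0 : G) ∈ A

def Delta {G : Type*} [AddCommGroup G] (A : Set G) : ℕ :=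
  sSup {n | ∃ B : Finset G, ((B : Set G) - (B : Set G)) ∩ A = {0} ∧ B.card = n}

def DeltaBar {G : Type*} [AddCommGroup G] (A : Set G) : ℕ :=
  sSup {n | ∃ B : Finset G, ((B : Set G) - (B : Set G)) ⊆ A ∧ B.card = n}

def deltaL {G : Type*} [AddCommGroup G] [Fintype G] (A : Set G) : ℝ :=
  (Delta A : ℝ) / (Fintype.card G : ℝ)

def deltaU {G : Type*} [AddCommGroup G] (A : Set G) : ℝ :=
  1 / (DeltaBar A : ℝ)

def ftrans {G : Type*} [AddCommGroup G] [Fintype G] (f : G → ℝ) (γ : AddChar G Circle) : ℂ :=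
  ∑ x, (γ x : ℂ) * (f x : ℂ)

def PosFT {G : Type*} [AddCommGroup G] [Fintype G] (f : G → ℝ) : Prop :=
  ∀ γ : AddChar G Circle, 0 ≤ ftrans f γ

def lamSet {G : Type*} [AddCommGroup G] [Fintype G] (S : Set (G → ℝ)) : Set ℝ :=
  {r | ∃ f ∈ S, PosFT f ∧ (∑ x, f x) ≠ 0 ∧ r = f 0 / ∑ x, f x}

def lam {G : Type*} [AddCommGroup G] [Fintype G] (A : Set G) : ℝ :=
  sInf (lamSet {f | f ≠ 0 ∧ ∀ x ∉ A, f x = 0})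

def lamMinus {G : Type*} [AddCommGroup G] [Fintype G] (A : Set G) : ℝ :=
  sInf (lamSet {f | f ≠ 0 ∧ ∀ x ∉ A, f x ≤ 0})

def lamPlus {G : Type*} [AddCommGroup G] [Fintype G] (A : Set G) : ℝ :=
  sInf (lamSet {f | f ≠ 0 ∧ (∀ x ∉ A, f x = 0) ∧ ∀ x ∈ A, 0 ≤ f x})

def lamPM {G : Type*} [AddCommGroup G] [Fintype G] (A : Set G) : ℝ :=
  sInf (lamSet {f | f ≠ 0 ∧ (∀ x ∉ A, f x ≤ 0) ∧ ∀ x ∈ A, 0 ≤ f x})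

namespace S19

def eps : ZMod 2 → ℝ := fun a => if a = 0 then 1 else -1

lemma toCircle_coe (a : ZMod 2) : ((ZMod.toCircle a : Circle) : ℂ) = (eps a : ℂ) := by
  have ha : a = 0 ∨ a = 1 := by revert a; decide
  rcases ha with h | h <;> subst h
  · simp [eps, AddChar.map_zero_eq_one]
  · rw [show (1 : ZMod 2) = ((1 : ℕ) : ZMod 2) by norm_num, ZMod.toCircle_natCast]
    rw [show (2 * (Real.pi:ℂ) * Complex.I * ((1:ℕ):ℂ) / ((2:ℕ):ℂ)) = Real.pi * Complex.I by
      push_cast; ring]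
    simp [eps, Complex.exp_pi_mul_I]

lemma charSum_nonneg {A : Type*} [AddCommGroup A] [Fintype A] (ψ : AddChar A ℂ) :
    0 ≤ ∑ x, ψ x := by
  classical
  rw [AddChar.sum_eq_ite]
  split_ifs
  · rw [show ((Fintype.card A : ℂ)) = ((Fintype.card A : ℝ) : ℂ) by push_cast; ring]
    exact Complex.zero_le_real.mpr (Nat.cast_nonneg _)
  · exact le_refl _

variable {n : ℕ}

/-- the character `x ↦ (-1)^(x i)` -/
def chi (n : ℕ) (i : Fin n) : AddChar (Fin n → ZMod 2) Circle :=
  ZMod.toCircle.compAddMonoidHom (Pi.evalAddMonoidHom (fun _ => ZMod 2) i)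

lemma chi_coe (i : Fin n) (x : Fin n → ZMod 2) : ((chi n i x : Circle) : ℂ) = (eps (x i) : ℂ) :=
  toCircle_coe _

lemma eps_eq (a : ZMod 2) : eps a = 1 - 2 * (if a = 1 then (1:ℝ) else 0) := by
  have ha : a = 0 ∨ a = 1 := by revert a; decide
  rcases ha with h | h <;> subst h <;> norm_num [eps]

lemma sum_eps (x : Fin n → ZMod 2) :
    ∑ i, eps (x i) = (n : ℝ) - 2 * ((Finset.univ.filter fun i => x i = 1).card : ℝ) := by
  simp_rw [eps_eq]
  rw [Finset.sum_sub_distrib, Finset.sum_const, ← Finset.mul_sum, Finset.sum_boole]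
  simp

/-- the decomposition of the witness function -/
lemma decomp (k : ℕ) (x : Fin n → ZMod 2) :
    ((k:ℝ) + 1) - ((Finset.univ.filter fun i => x i = 1).card : ℝ)
      = ((k:ℝ) + 1 - (n:ℝ)/2) + (1/2) * ∑ i, eps (x i) := by
  rw [sum_eps]; ring

lemma eps_add_one (a : ZMod 2) : eps (a + 1) = - eps a := by
  have ha : a = 0 ∨ a = 1 := by revert a; decide
  rcases ha with h | h <;> subst h
  · norm_num [eps]
  · rw [show (1 + 1 : ZMod 2) = 0 from by decide]; norm_num [eps]

lemma sum_eps_single (i : Fin n) : ∑ x : Fin n → ZMod 2, eps (x i) = 0 := by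
  have h : ∑ x : Fin n → ZMod 2, eps (x i) = ∑ x : Fin n → ZMod 2, - eps (x i) := by
    refine Fintype.sum_equiv (Equiv.addRight ((Pi.single i 1 : Fin n → ZMod 2))) _ _ fun x => ?_
    have : (x + (Pi.single i 1 : Fin n → ZMod 2)) i = x i + 1 := by simp
    simp only [Equiv.coe_addRight, this, eps_add_one, neg_neg]
  have h2 : ∑ x : Fin n → ZMod 2, - eps (x i) = - ∑ x : Fin n → ZMod 2, eps (x i) :=
    Finset.sum_neg_distrib _
  linarith [h, h2]

/-- positivity of the Fourier transform of real functions, spelled for `chi` -/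
lemma ftrans_chi (f : (Fin n → ZMod 2) → ℝ) (i : Fin n) :
    ftrans f (chi n i) = ((∑ x, eps (x i) * f x : ℝ) : ℂ) := by
  rw [ftrans]
  push_cast
  exact Finset.sum_congr rfl fun x _ => by rw [chi_coe]

lemma ftrans_one (f : (Fin n → ZMod 2) → ℝ) :
    ftrans f 1 = ((∑ x, f x : ℝ) : ℂ) := by
  rw [ftrans]
  push_cast
  exact Finset.sum_congr rfl fun x _ => by
    simp [AddChar.one_apply]

lemma sum_pos_of_posFT (f : (Fin n → ZMod 2) → ℝ) (hP : PosFT f)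
    (hne : (∑ x, f x) ≠ 0) : 0 < ∑ x, f x := by
  have h := hP 1
  rw [ftrans_one] at h
  exact lt_of_le_of_ne (Complex.zero_le_real.mp h) (Ne.symm hne)

end S19


theorem stmt19 (n : ℕ) (k : ℕ)
    (normG : (Fin n → ZMod 2) → ℕ)
    (hnorm : normG = fun x => (Finset.univ.filter fun i => x i = 1).card)
    (Bk Ak : Set (Fin n → ZMod 2))
    (hBk : Bk = {x | normG x ≤ k})
    (hAk : Ak = {x | k < normG x} ∪ {0})
    (hk1 : (n : ℝ) / 2 - 1 < (k : ℝ)) (hk2 : k ≤ n) :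
    lamPM Bk ≤ (2 * (k : ℝ) + 2) / ((2 ^ n : ℝ) * (2 * (k : ℝ) + 2 - (n : ℝ))) ∧
    1 - (n : ℝ) / (2 * (k : ℝ) + 2) ≤ lamPM Ak := by
  classical
  subst hnorm hBk hAk
  set q : ℝ := (2:ℝ)^n with hq
  have hcard : (Fintype.card (Fin n → ZMod 2) : ℝ) = q := by
    rw [hq]; simp [ZMod.card]
  set c : ℝ := (k:ℝ) + 1 - (n:ℝ)/2 with hc
  have hcpos : 0 < c := by rw [hc]; linarith
  have hqpos : (0:ℝ) < q := by positivity
  set g : (Fin n → ZMod 2) → ℝ :=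
    fun x => (k:ℝ) + 1 - ((Finset.univ.filter fun i => x i = 1).card : ℝ) with hg
  have hdec : ∀ x, g x = c + (1/2) * ∑ i, S19.eps (x i) := fun x => S19.decomp k x
  have hg0 : g 0 = (k:ℝ) + 1 := by
    have : (Finset.univ.filter fun i : Fin n => (0 : Fin n → ZMod 2) i = 1) = ∅ := by
      ext i; simp
    simp [hg, this]
  have hsumg : ∑ x, g x = q * c := by
    simp only [hdec]
    rw [Finset.sum_add_distrib, Finset.sum_const, nsmul_eq_mul, Finset.card_univ, hcard]
    have h0 : ∑ x : Fin n → ZMod 2, (1/2:ℝ) * ∑ i, S19.eps (x i) = 0 := by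
      rw [← Finset.mul_sum, Finset.sum_comm]
      simp [S19.sum_eps_single]
    rw [h0, add_zero]
  -- Positivity of the Fourier transform of g
  have hPg : PosFT g := by
    intro γ
    set γ' : AddChar (Fin n → ZMod 2) ℂ := Circle.coeHom.compAddChar γ with hγ'
    have key : ftrans g γ = (c:ℂ) * ∑ x, γ' x
        + (1/2) * ∑ i, ∑ x, (γ' * Circle.coeHom.compAddChar (S19.chi n i)) x := by
      rw [ftrans]
      have step1 : ∑ x, (γ x : ℂ) * ((g x : ℝ):ℂ)
          = ∑ x, ((c:ℂ) * γ' x + (1/2) * ∑ i, γ' x * ((S19.eps (x i) : ℝ):ℂ)) := by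
        refine Finset.sum_congr rfl fun x _ => ?_
        have hx : ((g x : ℝ):ℂ) = (c:ℂ) + (1/2) * ∑ i, ((S19.eps (x i) : ℝ):ℂ) := by
          rw [hdec x]; push_cast; ring
        have hgx : γ' x = ((γ x : Circle) : ℂ) := rfl
        rw [hx, ← hgx, ← Finset.mul_sum]; ring
      rw [step1, Finset.sum_add_distrib, ← Finset.mul_sum, ← Finset.mul_sum, Finset.sum_comm]
      congr 2
      refine Finset.sum_congr rfl fun i _ => Finset.sum_congr rfl fun x _ => ?_
      rw [AddChar.mul_apply]
      congr 1
      exact (S19.chi_coe i x).symm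
    rw [key]
    have h1 : (0:ℂ) ≤ (c:ℂ) * ∑ x, γ' x :=
      mul_nonneg (Complex.zero_le_real.mpr hcpos.le) (S19.charSum_nonneg γ')
    have h2 : (0:ℂ) ≤ (1/2:ℂ) * ∑ i, ∑ x, (γ' * Circle.coeHom.compAddChar (S19.chi n i)) x := by
      refine mul_nonneg ?_ (Finset.sum_nonneg fun i _ => S19.charSum_nonneg _)
      rw [show ((1/2:ℂ)) = (((1/2:ℝ)):ℂ) by push_cast; ring]
      exact Complex.zero_le_real.mpr (by norm_num)
    exact add_nonneg h1 h2
  have hsumg_ne : (∑ x, g x) ≠ 0 := by rw [hsumg]; positivity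
  constructor
  · -- upper bound for lamPM Bk
    have hmem : (g 0 / ∑ x, g x) ∈
        lamSet {f : (Fin n → ZMod 2) → ℝ |
          f ≠ 0 ∧ (∀ x ∉ {x | (Finset.univ.filter fun i => x i = 1).card ≤ k}, f x ≤ 0) ∧
            ∀ x ∈ {x | (Finset.univ.filter fun i => x i = 1).card ≤ k}, 0 ≤ f x} := by
      refine ⟨g, ⟨?_, ?_, ?_⟩, hPg, hsumg_ne, rfl⟩
      · intro h
        have := congrFun h 0
        rw [hg0] at this
        simp at this
        linarith [Nat.cast_nonneg (α := ℝ) k, this]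
      · intro x hx
        simp only [Set.mem_setOf_eq, not_le] at hx
        have : (k:ℝ) + 1 ≤ ((Finset.univ.filter fun i => x i = 1).card : ℝ) := by
          exact_mod_cast hx
        simp only [hg]; linarith
      · intro x hx
        simp only [Set.mem_setOf_eq] at hx
        have : ((Finset.univ.filter fun i => x i = 1).card : ℝ) ≤ (k:ℝ) := by exact_mod_cast hx
        simp only [hg]; linarith
    have hbdd : BddBelow (lamSet {f : (Fin n → ZMod 2) → ℝ |
          f ≠ 0 ∧ (∀ x ∉ {x | (Finset.univ.filter fun i => x i = 1).card ≤ k}, f x ≤ 0) ∧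
            ∀ x ∈ {x | (Finset.univ.filter fun i => x i = 1).card ≤ k}, 0 ≤ f x}) := by
      refine ⟨0, fun r hr => ?_⟩
      obtain ⟨f, ⟨hf0, hfout, hfin⟩, hPf, hne, hr⟩ := hr
      have hS : 0 < ∑ x, f x := S19.sum_pos_of_posFT f hPf hne
      have hf00 : 0 ≤ f 0 := by
        refine hfin 0 ?_
        simp
      rw [hr]
      exact div_nonneg hf00 hS.le
    have hle := csInf_le hbdd hmem
    refine le_trans hle (le_of_eq ?_)
    rw [hg0, hsumg, hq, hc]
    have h2k : (0:ℝ) < (2:ℝ)^n * (2 * k + 2 - n) := by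
      have : (0:ℝ) < 2 * k + 2 - n := by linarith
      positivity
    have hkne : (0:ℝ) < (2:ℝ)^n * ((k:ℝ) + 1 - (n:ℝ)/2) := by positivity
    rw [div_eq_div_iff hkne.ne' h2k.ne']
    ring
  · -- lower bound for lamPM Ak
    refine le_csInf ?_ ?_
    · -- nonempty: delta at 0
      refine ⟨1, (fun x => if x = 0 then 1 else 0), ⟨?_, ?_, ?_⟩, ?_, ?_, ?_⟩
      · intro h
        have := congrFun h 0
        simp at this
      · intro x hx
        have hx0 : x ≠ 0 := fun h => hx (Or.inr h)
        simp [hx0]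
      · intro x _
        by_cases hx0 : x = 0 <;> simp [hx0]
      · intro γ
        rw [ftrans]
        have : ∀ x : Fin n → ZMod 2,
            (γ x : ℂ) * (((if x = 0 then (1:ℝ) else 0) : ℝ) : ℂ)
              = if x = 0 then (γ x : ℂ) else 0 := by
          intro x; split_ifs <;> simp
        rw [Finset.sum_congr rfl fun x _ => this x, Finset.sum_ite_eq' Finset.univ 0]
        simp [AddChar.map_zero_eq_one]
      · simp
      · simp
    · intro r hr
      obtain ⟨f, ⟨hf0, hfout, hfin⟩, hPf, hne, hr⟩ := hr
      have hS : 0 < ∑ x, f x := S19.sum_pos_of_posFT f hPf hne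
      -- lower bound on the correlation
      have key1 : c * (∑ x, f x) ≤ ∑ x, f x * g x := by
        have hexp : ∑ x, f x * g x
            = c * (∑ x, f x) + (1/2) * ∑ i, ∑ x, S19.eps (x i) * f x := by
          have : ∀ x, f x * g x = c * f x + (1/2) * ∑ i, S19.eps (x i) * f x := by
            intro x
            rw [hdec x, ← Finset.sum_mul]
            ring
          simp only [this]
          rw [Finset.sum_add_distrib, ← Finset.mul_sum, ← Finset.mul_sum, Finset.sum_comm]
        rw [hexp]
        have hnn : ∀ i : Fin n, 0 ≤ ∑ x, S19.eps (x i) * f x := by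
          intro i
          have h := hPf (S19.chi n i)
          rw [S19.ftrans_chi] at h
          exact Complex.zero_le_real.mp h
        nlinarith [Finset.sum_nonneg fun i (_ : i ∈ Finset.univ) => hnn i]
      have key2 : ∑ x, f x * g x ≤ f 0 * ((k:ℝ) + 1) := by
        calc ∑ x, f x * g x
            ≤ ∑ x : Fin n → ZMod 2, (if x = 0 then f 0 * ((k:ℝ)+1) else 0) := by
              refine Finset.sum_le_sum fun x _ => ?_
              by_cases hx : x = 0
              · subst hx; rw [hg0]; simp
              · simp only [hx, if_false]
                by_cases hA : x ∈ {y : Fin n → ZMod 2 |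
                    k < (Finset.univ.filter fun i => y i = 1).card} ∪ {0}
                · rcases hA with hA | hA
                  · have hgx : g x ≤ 0 := by
                      simp only [Set.mem_setOf_eq] at hA
                      have : (k:ℝ) + 1 ≤ ((Finset.univ.filter fun i => x i = 1).card : ℝ) := by
                        exact_mod_cast hA
                      simp only [hg]; linarith
                    exact mul_nonpos_of_nonneg_of_nonpos (hfin x (Or.inl hA)) hgx
                  · exact absurd hA hx
                · have hfx : f x ≤ 0 := hfout x hA
                  have hgx : 0 ≤ g x := by
                    simp only [Set.mem_union, Set.mem_setOf_eq, Set.mem_singleton_iff,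
                      not_or, not_lt] at hA
                    have : ((Finset.univ.filter fun i => x i = 1).card : ℝ) ≤ (k:ℝ) := by
                      exact_mod_cast hA.1
                    simp only [hg]; linarith
                  exact mul_nonpos_of_nonpos_of_nonneg hfx hgx
          _ = f 0 * ((k:ℝ)+1) := by rw [Finset.sum_ite_eq' Finset.univ 0]; simp
      rw [hr]
      have hdivle : c / ((k:ℝ)+1) ≤ f 0 / ∑ x, f x := by
        rw [div_le_div_iff₀ (by positivity) hS]
        nlinarith [key1, key2]
      refine le_trans (le_of_eq ?_) hdivle
      rw [hc]
      have hk1' : (k:ℝ) + 1 ≠ 0 := by positivity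
      have : (2:ℝ) * k + 2 ≠ 0 := by positivity
      field_simp
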